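/- Let p be a prime, θ an infinite cardinal, μ̄ = ⟨μ_n : n < ω⟩ a sequence of cardinals, and set t_ℓ = p for all ℓ. Assume that ∏_{ℓ<ω}[μ_ℓ]^{p} is not a union of at most θ many members of J⁴_{t̄,μ̄} (this holds, for instance, when μ_n ≥ beth_{p−1}(θ)⁺ for all n). Then the torsion-complete group B̂_{μ̄} is not a union of at most θ many members of I⁰_{μ̄}; in other words, the ideal I¹_{μ̄,θ} on B̂_{μ̄} is proper. -/

import Mathlib

/-- Relative beth numbers: `beth₀(θ) = θ`, `beth_{n+1}(θ) = 2^{beth_n(θ)}`. -/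
def bethRel (θ : Cardinal) : ℕ → Cardinal
  | 0 => θ
  | n + 1 => 2 ^ bethRel θ n

/-- The set `∏_{ℓ<ω} [μ_ℓ]^{t_ℓ}` of sequences `ν` with `ν ℓ ⊆ μ_ℓ` of size exactly `t ℓ`. -/
def FullProd (t : ℕ → ℕ) (mu : ℕ → Cardinal) : Set (∀ ℓ, Set (mu ℓ).ord.ToType) :=
  {ν | ∀ ℓ, (ν ℓ).Finite ∧ (ν ℓ).ncard = t ℓ}

/-- `η` is a member of `∏_{i∈[ℓ,k)} [ω]^{t_i}` (only coordinates in `[ℓ,k)` matter). -/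
def SeqIdx (t : ℕ → ℕ) (ℓ k : ℕ) (η : ℕ → Set ℕ) : Prop :=
  ∀ i, ℓ ≤ i → i < k → (η i).Finite ∧ (η i).ncard = t i

/-- The system `⟨ν_η : η ∈ ∏_{i∈[ℓ,k)}[ω]^{t_i}⟩` witnessing clauses (a),(b),(c) of the
definition of `J⁴_{t̄,μ̄}` for the countably infinite set `B ⊆ μ_ℓ`. -/
def IsJ4System (t : ℕ → ℕ) (mu : ℕ → Cardinal) (A : Set (∀ ℓ, Set (mu ℓ).ord.ToType))
    (ℓ k : ℕ) (B : Set (mu ℓ).ord.ToType)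
    (ν : (ℕ → Set ℕ) → (∀ j, Set (mu j).ord.ToType)) : Prop :=
  (∀ η, SeqIdx t ℓ k η → ν η ∈ A) ∧
  (∀ η₁ η₂, SeqIdx t ℓ k η₁ → SeqIdx t ℓ k η₂ → ∀ m, ℓ ≤ m → m ≤ k →
    (∀ i, ℓ ≤ i → i < m → η₁ i = η₂ i) → ∀ j, j < m → ν η₁ j = ν η₂ j) ∧
  (∀ η₀, SeqIdx t ℓ k η₀ → ℓ < k →
    {u : Set (mu ℓ).ord.ToType | u ⊆ B ∧ u.Finite ∧ u.ncard = t ℓ} =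
      {v | ∃ η, SeqIdx t ℓ k η ∧ v = ν η ℓ}) ∧
  (∀ η₀, SeqIdx t ℓ k η₀ → ∀ m, ℓ ≤ m → m < k →
    ∃ E : Set (mu m).ord.ToType, E.Countable ∧ E.Infinite ∧
      {u : Set (mu m).ord.ToType | u ⊆ E ∧ u.Finite ∧ u.ncard = t m} =
        {v | ∃ η, SeqIdx t ℓ k η ∧ (∀ i, ℓ ≤ i → i < m → η i = η₀ i) ∧ v = ν η m})

/-- Membership in the ideal `J⁴_{t̄,μ̄}`. -/
def InJ4 (t : ℕ → ℕ) (mu : ℕ → Cardinal) (A : Set (∀ ℓ, Set (mu ℓ).ord.ToType)) : Prop :=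
  ∃ L : ℕ, ∀ ℓ, L ≤ ℓ → ∀ B : Set (mu ℓ).ord.ToType, B.Countable → B.Infinite →
    ∃ k, ℓ < k ∧ ¬ ∃ ν, IsJ4System t mu A ℓ k B ν

/-- The ambient product group `∏_{n<ω} B_{μ_n}` where `B_{μ_n} = ⊕_{α<μ_n} ℤ/p^{n+1}ℤ`;
the torsion completion `B̂_{μ̄}` is its subset of elements of bounded order. -/
abbrev BProd (p : ℕ) (mu : ℕ → Cardinal) : Type :=
  ∀ n : ℕ, ((mu n).ord.ToType →₀ ZMod (p ^ (n + 1)))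

/-- The torsion completion `B̂_{μ̄}` of `B_{μ̄} = ⊕_{n<ω} ⊕_{α<μ_n} ℤ/p^{n+1}ℤ`, realized as
the set of elements of bounded order in `∏_n B_{μ_n}`. -/
def BhatSet (p : ℕ) (mu : ℕ → Cardinal) : Set (BProd p mu) :=
  {x | ∃ k : ℕ, ∀ n, (p ^ k) • x n = 0}

/-- `B_{μ̄}` inside `B̂_{μ̄}`: the elements with finitely many nonzero components. -/
def BFin (p : ℕ) (mu : ℕ → Cardinal) : Set (BProd p mu) :=
  {x | {n | x n ≠ 0}.Finite}

/-- `B_{μ̄↾n}`: the elements supported on components `< n`. -/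
def BSeg (p : ℕ) (mu : ℕ → Cardinal) (n : ℕ) : Set (BProd p mu) :=
  {x | ∀ m, n ≤ m → x m = 0}

/-- The closure `cl(X)` in `B̂_{μ̄}`: points of `B̂_{μ̄}` approximated modulo `pⁿB̂_{μ̄}` by
members of `X`, for every `n`. -/
def clBhat (p : ℕ) (mu : ℕ → Cardinal) (X : Set (BProd p mu)) : Set (BProd p mu) :=
  {x | x ∈ BhatSet p mu ∧ ∀ n : ℕ, ∃ y ∈ X, ∃ z ∈ BhatSet p mu, (p ^ n) • z = x - y}

/-- The ideal `I⁰_{μ̄}`: sets `A ⊆ B̂_{μ̄}` such that for every large enough `n`,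
`cl(⟨A⟩) ∩ B_{μ̄} ⊆ B_{μ̄↾n}`. -/
def InI0 (p : ℕ) (mu : ℕ → Cardinal) (A : Set (BProd p mu)) : Prop :=
  A ⊆ BhatSet p mu ∧ ∃ N : ℕ, ∀ n, N ≤ n →
    clBhat p mu (AddSubgroup.closure A : Set (BProd p mu)) ∩ BFin p mu ⊆ BSeg p mu n

noncomputable def setF {X : Type*} (s : Set X) : Finset X := by
  classical exact if h : s.Finite then h.toFinset else ∅

lemma setF_coe {X : Type*} (F : Finset X) : setF (↑F : Set X) = F := by
  classical
  unfold setF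
  rw [dif_pos F.finite_toSet]
  ext x; simp

lemma setF_empty {X : Type*} : setF (∅ : Set X) = ∅ := by
  classical
  unfold setF
  rw [dif_pos Set.finite_empty]
  ext x; simp

noncomputable def indicF (p : ℕ) (mu : ℕ → Cardinal) (j : ℕ)
    (s : Finset (mu j).ord.ToType) : ((mu j).ord.ToType →₀ ZMod (p ^ (j + 1))) :=
  ∑ β ∈ s, Finsupp.single β 1

noncomputable def Fmap (p : ℕ) (mu : ℕ → Cardinal) (ν : ∀ j, Set (mu j).ord.ToType) :
    BProd p mu :=
  fun j => (p ^ j) • indicF p mu j (setF (ν j))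

lemma pow_succ_smul_indicF (p : ℕ) (mu : ℕ → Cardinal) (j : ℕ)
    (s : Finset (mu j).ord.ToType) : (p ^ (j + 1)) • indicF p mu j s = 0 := by
  unfold indicF
  rw [Finset.smul_sum]
  refine Finset.sum_eq_zero fun β _ => ?_
  rw [Finsupp.smul_single]
  have : (p ^ (j + 1)) • (1 : ZMod (p ^ (j + 1))) = 0 := by
    rw [nsmul_eq_mul, mul_one, ZMod.natCast_self]
  rw [this, Finsupp.single_zero]

lemma p_smul_Fmap (p : ℕ) (mu : ℕ → Cardinal) (ν : ∀ j, Set (mu j).ord.ToType) (j : ℕ) :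
    p • Fmap p mu ν j = 0 := by
  show p • ((p ^ j) • indicF p mu j (setF (ν j))) = 0
  rw [smul_smul, ← pow_succ']
  exact pow_succ_smul_indicF p mu j _

lemma indicF_apply (p : ℕ) (mu : ℕ → Cardinal) (j : ℕ)
    (s : Finset (mu j).ord.ToType) (α : (mu j).ord.ToType) :
    indicF p mu j s α = if α ∈ s then 1 else 0 := by
  classical
  unfold indicF
  rw [Finsupp.finset_sum_apply]
  rw [show (∑ β ∈ s, (Finsupp.single β (1 : ZMod (p ^ (j + 1)))) α)
      = ∑ β ∈ s, if β = α then 1 else 0 from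
    Finset.sum_congr rfl fun β _ => Finsupp.single_apply]
  exact Finset.sum_ite_eq' s α (fun _ => 1)

lemma list_sum_const {α M : Type*} [AddCommMonoid M] (L : List α) (f : α → M) (c : M)
    (h : ∀ x ∈ L, f x = c) : (L.map f).sum = L.length • c := by
  induction L with
  | nil => simp
  | cons a l ih =>
    simp only [List.map_cons, List.sum_cons, List.length_cons]
    rw [h a (List.mem_cons_self), ih (fun x hx => h x (List.mem_cons_of_mem a hx)),
      succ_nsmul, add_comm]

lemma list_bind_map_sum {α β M : Type*} [AddCommMonoid M] (l : List α) (f : α → List β)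
    (g : β → M) : ((l.flatMap f).map g).sum = (l.map (fun a => ((f a).map g).sum)).sum := by
  induction l with
  | nil => simp
  | cons a t ih => simp [List.flatMap_cons, ih]

lemma smul_of_orderp {M : Type*} [AddCommGroup M] (p t : ℕ) (v : M) (h : p • v = 0) :
    (p * t + 1) • v = v := by
  rw [add_nsmul, one_nsmul, mul_nsmul, h, smul_zero, zero_add]

lemma pow_padd (p : ℕ) (d : ℕ) : ∃ t, (p + 1) ^ d = p * t + 1 := by
  induction d with
  | zero => exact ⟨0, by simp⟩
  | succ d ih =>
    obtain ⟨t, ht⟩ := ih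
    exact ⟨t * p + t + 1, by rw [pow_succ, ht]; ring⟩

lemma core_lemma (p : ℕ) (mu : ℕ → Cardinal) (Astar : Set (∀ ℓ, Set (mu ℓ).ord.ToType))
    (ℓ k : ℕ) (B : Set (mu ℓ).ord.ToType) (ν : (ℕ → Set ℕ) → ∀ j, Set (mu j).ord.ToType)
    (hsys : IsJ4System (fun _ => p) mu Astar ℓ k B ν) :
    ∀ d m, ℓ ≤ m → m + d = k → ∀ η₀, SeqIdx (fun _ => p) ℓ k η₀ →
    ∃ L : List (ℕ → Set ℕ),
      L.length = (p + 1) ^ d ∧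
      (∀ η ∈ L, SeqIdx (fun _ => p) ℓ k η ∧ ∀ i, ℓ ≤ i → i < m → η i = η₀ i) ∧
      (∀ j, m ≤ j → j < k → (L.map (fun η => Fmap p mu (ν η) j)).sum = 0) := by
  classical
  intro d
  induction d with
  | zero =>
    intro m _ hmk η₀ hη₀
    refine ⟨[η₀], by simp, ?_, ?_⟩
    · intro η hη
      rw [List.mem_singleton] at hη
      subst hη
      exact ⟨hη₀, fun _ _ _ => rfl⟩
    · intro j hj hjk
      omega
  | succ d ih =>
    intro m hm hmk η₀ hη₀
    have hmk' : m < k := by omega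
    obtain ⟨E, _, hEinf, hEq⟩ := hsys.2.2.2 η₀ hη₀ m hm hmk'
    set g := hEinf.natEmbedding with hg
    set a : Fin (p + 1) → (mu m).ord.ToType := fun s => (g (s : ℕ) : _) with ha_def
    have ha : Function.Injective a := by
      intro s s' h
      exact Fin.val_injective (g.injective (Subtype.coe_injective h))
    set T : Finset ((mu m).ord.ToType) := Finset.image a Finset.univ with hT
    have haT : ∀ s, a s ∈ T := fun s => Finset.mem_image_of_mem a (Finset.mem_univ s)
    have hTcard : T.card = p + 1 := by
      rw [hT, Finset.card_image_of_injective _ ha, Finset.card_univ, Fintype.card_fin]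
    have haE : ∀ s, a s ∈ E := fun s => (g (s : ℕ)).2
    have key : ∀ s : Fin (p + 1), ∃ L : List (ℕ → Set ℕ),
        L.length = (p + 1) ^ d ∧
        (∀ η ∈ L, SeqIdx (fun _ => p) ℓ k η ∧ (∀ i, ℓ ≤ i → i < m → η i = η₀ i) ∧
          Fmap p mu (ν η) m = (p ^ m) • indicF p mu m (T.erase (a s))) ∧
        (∀ j, m + 1 ≤ j → j < k → (L.map (fun η => Fmap p mu (ν η) j)).sum = 0) := by
      intro s
      have hwmem : (↑(T.erase (a s)) : Set ((mu m).ord.ToType)) ∈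
          {u : Set ((mu m).ord.ToType) | u ⊆ E ∧ u.Finite ∧ u.ncard = (fun _ : ℕ => p) m} := by
        refine ⟨?_, (T.erase (a s)).finite_toSet, ?_⟩
        · intro x hx
          have hxT : x ∈ T := Finset.mem_of_mem_erase (by exact_mod_cast hx)
          rcases Finset.mem_image.1 hxT with ⟨s', _, rfl⟩
          exact haE s'
        · rw [Set.ncard_coe_finset, Finset.card_erase_of_mem (haT s), hTcard]
          simp
      rw [hEq] at hwmem
      obtain ⟨ηs, hηs, hagr, hval⟩ := hwmem
      obtain ⟨L, hL1, hL2, hL3⟩ := ih (m + 1) (by omega) (by omega) ηs hηs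
      refine ⟨L, hL1, ?_, hL3⟩
      intro η hη
      obtain ⟨hseq, hagr'⟩ := hL2 η hη
      refine ⟨hseq, fun i hi him => ?_, ?_⟩
      · rw [hagr' i hi (by omega), hagr i hi him]
      · have hνm : ν η m = ν ηs m :=
          hsys.2.1 η ηs hseq hηs (m + 1) (by omega) (by omega)
            (fun i hi him => hagr' i hi him) m (by omega)
        show (p ^ m) • indicF p mu m (setF (ν η m)) = _
        rw [hνm, ← hval, setF_coe]
    choose Ls hLs1 hLs2 hLs3 using key
    refine ⟨(List.finRange (p + 1)).flatMap Ls, ?_, ?_, ?_⟩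
    · rw [List.length_flatMap,
        list_sum_const (List.finRange (p + 1)) (fun a => (Ls a).length) ((p + 1) ^ d)
          (fun s _ => hLs1 s),
        List.length_finRange, smul_eq_mul, pow_succ]
      ring
    · intro η hη
      rw [List.mem_flatMap] at hη
      obtain ⟨s, _, hs⟩ := hη
      obtain ⟨h1, h2, _⟩ := hLs2 s η hs
      exact ⟨h1, h2⟩
    · intro j hj hjk
      rcases eq_or_lt_of_le hj with he | hlt
      · subst he
        rw [list_bind_map_sum]
        rw [List.map_congr_left (fun s _ =>
          (list_sum_const (Ls s) _ ((p ^ m) • indicF p mu m (T.erase (a s)))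
            (fun η hη => (hLs2 s η hη).2.2)).trans (by rw [hLs1 s]))]
        rw [← Fin.sum_univ_def]
        have hgadget : ∑ s : Fin (p + 1), indicF p mu m (T.erase (a s))
            = p • indicF p mu m T := by
          have h1 : ∀ s : Fin (p + 1), indicF p mu m (T.erase (a s))
              = indicF p mu m T - Finsupp.single (a s) 1 := fun s => by
            unfold indicF
            exact Finset.sum_erase_eq_sub (haT s)
          rw [Finset.sum_congr rfl (fun s _ => h1 s), Finset.sum_sub_distrib,
            Finset.sum_const, Finset.card_univ, Fintype.card_fin]
          have h2 : indicF p mu m T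
              = ∑ s : Fin (p + 1), Finsupp.single (a s) (1 : ZMod (p ^ (m + 1))) := by
            unfold indicF
            rw [hT, Finset.sum_image (fun x _ y _ h => ha h)]
          rw [← h2, succ_nsmul, add_sub_cancel_right]
        calc (∑ s : Fin (p + 1), ((p + 1) ^ d) • ((p ^ m) • indicF p mu m (T.erase (a s))))
            = ((p + 1) ^ d) • ((p ^ m) • ∑ s : Fin (p + 1), indicF p mu m (T.erase (a s))) := by
              rw [Finset.smul_sum, Finset.smul_sum]
          _ = 0 := by
              rw [hgadget,
                show (p ^ m) • (p • indicF p mu m T) = (p ^ (m + 1)) • indicF p mu m T from by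
                  rw [smul_smul, ← pow_succ],
                pow_succ_smul_indicF, smul_zero]
      · rw [list_bind_map_sum]
        refine List.sum_eq_zero fun x hx => ?_
        rw [List.mem_map] at hx
        obtain ⟨s, _, rfl⟩ := hx
        exact hLs3 s j (by omega) hjk


lemma Fmap_mem_Bhat (p : ℕ) (mu : ℕ → Cardinal) (ν : ∀ j, Set (mu j).ord.ToType) :
    Fmap p mu ν ∈ BhatSet p mu :=
  ⟨1, fun n => by rw [pow_one]; exact p_smul_Fmap p mu ν n⟩

lemma main_claim (p : ℕ) (hp : p.Prime) (mu : ℕ → Cardinal) (A : Set (BProd p mu))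
    (hA : InI0 p mu A) :
    InJ4 (fun _ => p) mu {ν | ν ∈ FullProd (fun _ => p) mu ∧ Fmap p mu ν ∈ A} := by
  classical
  by_contra hnot
  obtain ⟨_, N, hN⟩ := hA
  unfold InJ4 at hnot
  push_neg at hnot
  obtain ⟨ℓ, hNℓ, B, _, hBinf, hS⟩ := hnot N
  set g0 := hBinf.natEmbedding with hg0
  set gg : ℕ → (mu ℓ).ord.ToType := fun n => ↑(g0 n) with hgg
  have hgginj : Function.Injective gg := fun n n' h =>
    g0.injective (Subtype.coe_injective h)
  have hggB : ∀ n, gg n ∈ B := fun n => (g0 n).2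
  set uF : Finset ((mu ℓ).ord.ToType) := (Finset.range p).image gg with huF
  set u'F : Finset ((mu ℓ).ord.ToType) := (Finset.range p).image (fun i => gg (i + p)) with hu'F
  have hinj' : Function.Injective (fun i => gg (i + p)) := fun a b h => by
    have := hgginj h; omega
  have hucard : (↑uF : Set ((mu ℓ).ord.ToType)).ncard = p := by
    rw [Set.ncard_coe_finset, huF, Finset.card_image_of_injective _ hgginj,
      Finset.card_range]
  have hu'card : (↑u'F : Set ((mu ℓ).ord.ToType)).ncard = p := by
    rw [Set.ncard_coe_finset, hu'F, Finset.card_image_of_injective _ hinj',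
      Finset.card_range]
  have hu_sub : (↑uF : Set ((mu ℓ).ord.ToType)) ⊆ B := by
    intro x hx
    rcases Finset.mem_image.1 (by exact_mod_cast hx) with ⟨i, _, rfl⟩
    exact hggB i
  have hu'_sub : (↑u'F : Set ((mu ℓ).ord.ToType)) ⊆ B := by
    intro x hx
    rcases Finset.mem_image.1 (by exact_mod_cast hx) with ⟨i, _, rfl⟩
    exact hggB _
  have hgp_notin : gg p ∉ uF := by
    intro h
    rcases Finset.mem_image.1 h with ⟨i, hi, heq⟩
    have := hgginj heq
    rw [Finset.mem_range] at hi
    omega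
  have hgp_in : gg p ∈ u'F := by
    refine Finset.mem_image.2 ⟨0, Finset.mem_range.2 hp.pos, by rw [zero_add]⟩
  set νu : ∀ j, Set ((mu j).ord.ToType) :=
    Function.update (fun j => (∅ : Set ((mu j).ord.ToType))) ℓ (↑uF) with hνu
  set νu' : ∀ j, Set ((mu j).ord.ToType) :=
    Function.update (fun j => (∅ : Set ((mu j).ord.ToType))) ℓ (↑u'F) with hνu'
  set x : BProd p mu := Fmap p mu νu - Fmap p mu νu' with hxdef
  have hxj : ∀ j, j ≠ ℓ → x j = 0 := by
    intro j hj
    rw [hxdef]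
    show Fmap p mu νu j - Fmap p mu νu' j = 0
    show (p ^ j) • indicF p mu j (setF (νu j)) - (p ^ j) • indicF p mu j (setF (νu' j)) = 0
    rw [hνu, hνu', Function.update_of_ne hj, Function.update_of_ne hj, sub_self]
  have hxℓ : x ℓ = (p ^ ℓ) • indicF p mu ℓ uF - (p ^ ℓ) • indicF p mu ℓ u'F := by
    rw [hxdef]
    show Fmap p mu νu ℓ - Fmap p mu νu' ℓ = _
    show (p ^ ℓ) • indicF p mu ℓ (setF (νu ℓ)) - (p ^ ℓ) • indicF p mu ℓ (setF (νu' ℓ)) = _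
    rw [hνu, hνu', Function.update_self, Function.update_self, setF_coe, setF_coe]
  have hpx : ∀ j, p • x j = 0 := by
    intro j
    rw [hxdef]
    show p • (Fmap p mu νu j - Fmap p mu νu' j) = 0
    rw [smul_sub, p_smul_Fmap, p_smul_Fmap, sub_self]
  have hxBhat : x ∈ BhatSet p mu := ⟨1, fun j => by rw [pow_one]; exact hpx j⟩
  have hxBFin : x ∈ BFin p mu := by
    refine Set.Finite.subset (Set.finite_singleton ℓ) ?_
    intro j hj
    rcases eq_or_ne j ℓ with rfl | hne
    · exact Set.mem_singleton _
    · exact absurd (hxj j hne) hj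
  haveI : NeZero (p ^ (ℓ + 1)) := ⟨(pow_pos hp.pos _).ne'⟩
  have hxne : x ℓ ≠ 0 := by
    intro h0
    have hval : x ℓ (gg p) = -((p ^ ℓ : ℕ) • (1 : ZMod (p ^ (ℓ + 1)))) := by
      rw [hxℓ, Finsupp.sub_apply, Finsupp.smul_apply, Finsupp.smul_apply,
        indicF_apply, indicF_apply, if_neg hgp_notin, if_pos hgp_in, smul_zero, zero_sub]
    rw [h0, Finsupp.zero_apply] at hval
    have : ((p ^ ℓ : ℕ) : ZMod (p ^ (ℓ + 1))) = 0 := by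
      rw [← mul_one ((p ^ ℓ : ℕ) : ZMod (p ^ (ℓ + 1))), ← nsmul_eq_mul]
      exact neg_eq_zero.1 hval.symm
    have hdvd := (ZMod.natCast_eq_zero_iff _ _).1 this
    have hle := Nat.le_of_dvd (pow_pos hp.pos ℓ) hdvd
    exact absurd hle (not_le.2 (Nat.pow_lt_pow_succ hp.one_lt))
  have hcl : x ∈ clBhat p mu (AddSubgroup.closure A : Set (BProd p mu)) := by
    refine ⟨hxBhat, fun n => ?_⟩
    set k := max (ℓ + 1) n with hk
    have hℓk : ℓ < k := lt_of_lt_of_le (Nat.lt_succ_self ℓ) (le_max_left _ _)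
    have hnk : n ≤ k := le_max_right _ _
    obtain ⟨ν, hsys⟩ := hS k hℓk
    have hη₀ : SeqIdx (fun _ => p) ℓ k (fun _ => (↑(Finset.range p) : Set ℕ)) := by
      intro i _ _
      exact ⟨(Finset.range p).finite_toSet,
        by rw [Set.ncard_coe_finset, Finset.card_range]⟩
    have hEq3 := hsys.2.2.1 _ hη₀ hℓk
    have hu_mem : (↑uF : Set ((mu ℓ).ord.ToType)) ∈
        {u : Set ((mu ℓ).ord.ToType) | u ⊆ B ∧ u.Finite ∧ u.ncard = (fun _ : ℕ => p) ℓ} :=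
      ⟨hu_sub, uF.finite_toSet, hucard⟩
    have hu'_mem : (↑u'F : Set ((mu ℓ).ord.ToType)) ∈
        {u : Set ((mu ℓ).ord.ToType) | u ⊆ B ∧ u.Finite ∧ u.ncard = (fun _ : ℕ => p) ℓ} :=
      ⟨hu'_sub, u'F.finite_toSet, hu'card⟩
    rw [hEq3] at hu_mem hu'_mem
    obtain ⟨ηu, hηu, hval_u⟩ := hu_mem
    obtain ⟨ηu', hηu', hval_u'⟩ := hu'_mem
    obtain ⟨Lu, hLu1, hLu2, hLu3⟩ :=
      core_lemma p mu _ ℓ k B ν hsys (k - (ℓ + 1)) (ℓ + 1) (by omega) (by omega) ηu hηu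
    obtain ⟨Lu', hLu'1, hLu'2, hLu'3⟩ :=
      core_lemma p mu _ ℓ k B ν hsys (k - (ℓ + 1)) (ℓ + 1) (by omega) (by omega) ηu' hηu'
    set y : BProd p mu := (Lu.map (fun η => Fmap p mu (ν η))).sum
      - (Lu'.map (fun η => Fmap p mu (ν η))).sum with hy
    have hy_mem : y ∈ AddSubgroup.closure A := by
      refine sub_mem ?_ ?_ <;>
      · refine AddSubgroup.list_sum_mem _ ?_
        intro v hv
        rcases List.mem_map.1 hv with ⟨η, hη, rfl⟩
        first
        | exact AddSubgroup.subset_closure (hsys.1 η (hLu2 η hη).1).2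
        | exact AddSubgroup.subset_closure (hsys.1 η (hLu'2 η hη).1).2
    have happly : ∀ (L : List (ℕ → Set ℕ)) (j : ℕ),
        ((L.map (fun η => Fmap p mu (ν η))).sum) j
          = (L.map (fun η => Fmap p mu (ν η) j)).sum := by
      intro L j
      induction L with
      | nil => rfl
      | cons aa l ih => simp only [List.map_cons, List.sum_cons, Pi.add_apply, ih]
    have pull : ∀ (L : List (ℕ → Set ℕ)) (j : ℕ),
        (L.map (fun η => Fmap p mu (ν η) j)).sum
          = (p ^ j) • (L.map (fun η => indicF p mu j (setF (ν η j)))).sum := by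
      intro L j
      induction L with
      | nil => simp
      | cons aa l ih =>
        simp only [List.map_cons, List.sum_cons, smul_add]
        rw [ih]
        rfl
    set w : ∀ j, ((mu j).ord.ToType →₀ ZMod (p ^ (j + 1))) := fun j =>
      (Lu.map (fun η => indicF p mu j (setF (ν η j)))).sum
        - (Lu'.map (fun η => indicF p mu j (setF (ν η j)))).sum with hw
    have hw0 : ∀ j, (p ^ (j + 1)) • w j = 0 := by
      intro j
      have haux : ∀ (L : List (ℕ → Set ℕ)),
          (p ^ (j + 1)) • (L.map (fun η => indicF p mu j (setF (ν η j)))).sum = 0 := by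
        intro L
        rw [List.smul_sum]
        refine List.sum_eq_zero fun v hv => ?_
        rcases List.mem_map.1 hv with ⟨c, hc, rfl⟩
        rcases List.mem_map.1 hc with ⟨b, _, rfl⟩
        exact pow_succ_smul_indicF p mu j _
      rw [hw, smul_sub, haux, haux, sub_self]
    set z : BProd p mu := fun j => if k ≤ j then -((p ^ (j - n)) • w j) else 0 with hz
    have hzBhat : z ∈ BhatSet p mu := by
      refine ⟨n + 1, fun j => ?_⟩
      rw [hz]
      by_cases hkj : k ≤ j
      · simp only [if_pos hkj]
        rw [smul_neg, smul_smul, ← pow_add,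
          show n + 1 + (j - n) = j + 1 by omega, hw0, neg_zero]
      · simp only [if_neg hkj, smul_zero]
    have hyhigh : ∀ j, k ≤ j → y j = (p ^ j) • w j := by
      intro j hjk
      rw [hy]
      show (Lu.map (fun η => Fmap p mu (ν η))).sum j
        - (Lu'.map (fun η => Fmap p mu (ν η))).sum j = _
      rw [happly, happly, pull, pull, hw, smul_sub]
    refine ⟨y, hy_mem, z, hzBhat, ?_⟩
    funext j
    show (p ^ n) • z j = (x - y) j
    rw [Pi.sub_apply]
    by_cases hjk : k ≤ j
    · rw [hz]
      simp only [if_pos hjk]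
      rw [hyhigh j hjk, hxj j (by omega), smul_neg, smul_smul, ← pow_add,
        show n + (j - n) = j by omega, zero_sub]
    · rw [hz]
      simp only [if_neg hjk, smul_zero]
      symm
      rw [sub_eq_zero]
      have hjk' : j < k := by omega
      rcases lt_trichotomy j ℓ with hjl | hje | hgt
      · rw [hxj j (by omega), hy]
        show (0 : _) = (Lu.map (fun η => Fmap p mu (ν η))).sum j
          - (Lu'.map (fun η => Fmap p mu (ν η))).sum j
        have hlow : ∀ η, SeqIdx (fun _ => p) ℓ k η → ν η j = ν ηu j := fun η hη =>
          hsys.2.1 η ηu hη hηu ℓ le_rfl (le_of_lt hℓk)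
            (fun i hi hil => absurd hil (by omega)) j hjl
        have hcst : ∀ (L : List (ℕ → Set ℕ)),
            (∀ η ∈ L, SeqIdx (fun _ => p) ℓ k η) →
            (L.map (fun η => Fmap p mu (ν η) j)).sum = L.length • Fmap p mu (ν ηu) j := by
          intro L hL
          refine list_sum_const L _ _ fun η hη => ?_
          show (p ^ j) • indicF p mu j (setF (ν η j)) = (p ^ j) • indicF p mu j (setF (ν ηu j))
          rw [hlow η (hL η hη)]
        rw [happly, happly, hcst Lu (fun η hη => (hLu2 η hη).1),
          hcst Lu' (fun η hη => (hLu'2 η hη).1), hLu1, hLu'1, sub_self]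
      · subst hje
        rw [hxℓ, hy]
        show _ = (Lu.map (fun η => Fmap p mu (ν η))).sum j
          - (Lu'.map (fun η => Fmap p mu (ν η))).sum j
        have hatu : ∀ η ∈ Lu, Fmap p mu (ν η) j = (p ^ j) • indicF p mu j uF := by
          intro η hη
          obtain ⟨hseq, hagr⟩ := hLu2 η hη
          have hνj : ν η j = ν ηu j :=
            hsys.2.1 η ηu hseq hηu (j + 1) (by omega) (by omega)
              (fun i hi hil => hagr i hi hil) j (by omega)
          show (p ^ j) • indicF p mu j (setF (ν η j)) = _
          rw [hνj, ← hval_u, setF_coe]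
        have hatu' : ∀ η ∈ Lu', Fmap p mu (ν η) j = (p ^ j) • indicF p mu j u'F := by
          intro η hη
          obtain ⟨hseq, hagr⟩ := hLu'2 η hη
          have hνj : ν η j = ν ηu' j :=
            hsys.2.1 η ηu' hseq hηu' (j + 1) (by omega) (by omega)
              (fun i hi hil => hagr i hi hil) j (by omega)
          show (p ^ j) • indicF p mu j (setF (ν η j)) = _
          rw [hνj, ← hval_u', setF_coe]
        rw [happly, happly, list_sum_const Lu _ _ hatu, list_sum_const Lu' _ _ hatu',
          hLu1, hLu'1]
        obtain ⟨t, ht⟩ := pow_padd p (k - (j + 1))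
        rw [ht,
          smul_of_orderp p t _ (by rw [smul_smul, ← pow_succ']; exact pow_succ_smul_indicF p mu j _),
          smul_of_orderp p t _ (by rw [smul_smul, ← pow_succ']; exact pow_succ_smul_indicF p mu j _)]
      · rw [hxj j (by omega), hy]
        show (0 : _) = (Lu.map (fun η => Fmap p mu (ν η))).sum j
          - (Lu'.map (fun η => Fmap p mu (ν η))).sum j
        rw [happly, happly, hLu3 j (by omega) hjk', hLu'3 j (by omega) hjk', sub_self]
  have hseg := hN ℓ hNℓ ⟨hcl, hxBFin⟩ ℓ le_rfl
  exact hxne hseg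

/-- If `∏_{ℓ<ω}[μ_ℓ]^p` is not a union of at most `θ` many members of `J⁴_{t̄,μ̄}`
(`t_ℓ = p`), then `B̂_{μ̄}` is not a union of at most `θ` many members of `I⁰_{μ̄}`,
i.e. the ideal `I¹_{μ̄,θ}` is proper. -/
theorem I1_ideal_proper (p : ℕ) (hp : p.Prime) (θ : Cardinal)
    (hθ : Cardinal.aleph0 ≤ θ) (mu : ℕ → Cardinal)
    (hJ : ¬ ∃ S : Set (Set (∀ ℓ, Set (mu ℓ).ord.ToType)),
      Cardinal.mk S ≤ θ ∧ (∀ A ∈ S, InJ4 (fun _ => p) mu A) ∧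
      FullProd (fun _ => p) mu ⊆ ⋃₀ S) :
    ¬ ∃ S : Set (Set (BProd p mu)),
      Cardinal.mk S ≤ θ ∧ (∀ A ∈ S, InI0 p mu A) ∧ BhatSet p mu ⊆ ⋃₀ S := by
  rintro ⟨S, hcard, hI0, hcover⟩
  apply hJ
  refine ⟨(fun A => {ν | ν ∈ FullProd (fun _ => p) mu ∧ Fmap p mu ν ∈ A}) '' S,
    le_trans Cardinal.mk_image_le hcard, ?_, ?_⟩
  · rintro A' ⟨A, hA, rfl⟩
    exact main_claim p hp mu A (hI0 A hA)
  · intro ν hν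
    obtain ⟨A, hAS, hmem⟩ := hcover (Fmap_mem_Bhat p mu ν)
    exact ⟨_, ⟨A, hAS, rfl⟩, hν, hmem⟩
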